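/- Let d ≥ 2 be an integer and define the density matrices ρ⁰ = |0⟩⟨0| and ρ¹ = (1/(d−1))∑_{j=1}^{d−1}|j⟩⟨j| on ℂ^d, and ρ̄ = ½ρ⁰ + ½ρ¹. Then [S(M_d(ρ̄)) − S(M_d^c(ρ̄))] − ½[S(M_d(ρ⁰)) − S(M_d^c(ρ⁰))] − ½[S(M_d(ρ¹)) − S(M_d^c(ρ¹))] = 1. (This shows the channel private information satisfies P^{(1)}(M_d) ≥ 1 for all d.) -/

import Mathlib

open Matrix ComplexOrder

/-- Von Neumann entropy (base-2) of a matrix: −∑ λᵢ log₂ λᵢ over its eigenvalues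
(0 if the matrix is not Hermitian). -/
noncomputable def vnEntropy {n : ℕ} (ρ : Matrix (Fin n) (Fin n) ℂ) : ℝ :=
  if h : ρ.IsHermitian then -∑ i, (h.eigenvalues i) * Real.logb 2 (h.eigenvalues i) else 0

/-- The basis ket |i⟩ of ℂ^d (zero if out of range). -/
noncomputable def bket (d i : ℕ) : Fin d → ℂ := fun p => if (p : ℕ) = i then 1 else 0

/-- Kraus operator K_k = (1/√(d−1))|k⟩⟨0| + |d−1⟩⟨k+1| of M_d. -/
noncomputable def KrM (d k : ℕ) : Matrix (Fin d) (Fin d) ℂ :=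
  ((1 / Real.sqrt ((d : ℝ) - 1) : ℝ) : ℂ) • Matrix.vecMulVec (bket d k) (star (bket d 0)) +
    Matrix.vecMulVec (bket d (d-1)) (star (bket d (k+1)))

/-- The channel M_d. -/
noncomputable def chanMd (d : ℕ) (X : Matrix (Fin d) (Fin d) ℂ) : Matrix (Fin d) (Fin d) ℂ :=
  ∑ k ∈ Finset.range (d - 1), KrM d k * X * (KrM d k)ᴴ

/-- Kraus operator L_j = (1/√(d−1))|j⟩⟨0| of M_d^c, for 0 ≤ j ≤ d−2. -/
noncomputable def LrM (d j : ℕ) : Matrix (Fin (d-1)) (Fin d) ℂ :=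
  ((1 / Real.sqrt ((d : ℝ) - 1) : ℝ) : ℂ) • Matrix.vecMulVec (bket (d-1) j) (star (bket d 0))

/-- Kraus operator L_{d−1} = ∑_{i=1}^{d−1}|i−1⟩⟨i| of M_d^c. -/
noncomputable def VrM (d : ℕ) : Matrix (Fin (d-1)) (Fin d) ℂ :=
  Matrix.of fun a b => if (b : ℕ) = (a : ℕ) + 1 then 1 else 0

/-- The complementary channel M_d^c. -/
noncomputable def chanMdc (d : ℕ) (X : Matrix (Fin d) (Fin d) ℂ) :
    Matrix (Fin (d-1)) (Fin (d-1)) ℂ :=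
  (∑ j ∈ Finset.range (d - 1), LrM d j * X * (LrM d j)ᴴ) + VrM d * X * (VrM d)ᴴ

/-! ### Auxiliary lemmas: spectrum of diagonal matrices and `vnEntropy` -/

open Polynomial in
lemma aux_charpoly_diag {n : ℕ} (v : Fin n → ℂ) :
    (Matrix.diagonal v).charpoly = ∏ i, (X - C (v i)) := by
  have h : charmatrix (Matrix.diagonal v) =
      Matrix.diagonal (fun i => (X : ℂ[X]) - C (v i)) := by
    ext i j
    by_cases hij : i = j
    · subst hij; simp
    · simp [hij, Matrix.diagonal_apply_ne _ hij]
  rw [Matrix.charpoly, h, Matrix.det_diagonal]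

open Polynomial in
lemma aux_charpoly_conj {n : ℕ} (U A V : Matrix (Fin n) (Fin n) ℂ)
    (hUV : U * V = 1) : (U * A * V).charpoly = A.charpoly := by
  have hcomm : ∀ M : Matrix (Fin n) (Fin n) ℂ[X],
      Matrix.scalar (Fin n) (X : ℂ[X]) * M = M * Matrix.scalar (Fin n) (X : ℂ[X]) :=
    fun M => (Matrix.scalar_commute (X : ℂ[X]) (fun r => Commute.all _ _) M).eq
  have h : charmatrix (U * A * V) =
      (C : ℂ →+* ℂ[X]).mapMatrix U * charmatrix A * (C : ℂ →+* ℂ[X]).mapMatrix V := by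
    rw [charmatrix, charmatrix, mul_sub, sub_mul]
    congr 1
    · rw [← hcomm, mul_assoc, ← _root_.map_mul, hUV]
      simp
    · rw [← _root_.map_mul, ← _root_.map_mul]
  have hdet : ((C : ℂ →+* ℂ[X]).mapMatrix U).det * ((C : ℂ →+* ℂ[X]).mapMatrix V).det = 1 := by
    rw [← Matrix.det_mul, ← _root_.map_mul, hUV, _root_.map_one, Matrix.det_one]
  rw [Matrix.charpoly, Matrix.charpoly, h, Matrix.det_mul, Matrix.det_mul,
    mul_right_comm, hdet, one_mul]

open Polynomial in
lemma aux_herm_charpoly {n : ℕ} {A : Matrix (Fin n) (Fin n) ℂ} (hA : A.IsHermitian) :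
    A.charpoly = ∏ i, (X - C ((hA.eigenvalues i : ℂ))) := by
  conv_lhs => rw [hA.spectral_theorem, Unitary.conjStarAlgAut_apply]
  rw [aux_charpoly_conj _ _ _ (by
    simpa using (Matrix.mem_unitaryGroup_iff).mp hA.eigenvectorUnitary.2)]
  rw [aux_charpoly_diag]
  rfl

open Polynomial in
lemma aux_multiset_eigs {n : ℕ} {A : Matrix (Fin n) (Fin n) ℂ} (hA : A.IsHermitian)
    (f : Fin n → ℝ) (hAf : A = Matrix.diagonal (fun i => (f i : ℂ))) :
    (Finset.univ.val.map fun i => ((hA.eigenvalues i : ℂ))) =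
      Finset.univ.val.map (fun i => ((f i : ℂ))) := by
  have h1 := aux_herm_charpoly hA
  have h2 : A.charpoly = ∏ i, (X - C ((f i : ℂ))) := by rw [hAf, aux_charpoly_diag]
  have h3 := h1.symm.trans h2
  have e1 : (∏ i, ((X : ℂ[X]) - C ((hA.eigenvalues i : ℂ)))) =
      ((Finset.univ.val.map fun i => ((hA.eigenvalues i : ℂ))).map fun a => X - C a).prod := by
    rw [Multiset.map_map]; rfl
  have e2 : (∏ i, ((X : ℂ[X]) - C ((f i : ℂ)))) =
      ((Finset.univ.val.map fun i => ((f i : ℂ))).map fun a => X - C a).prod := by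
    rw [Multiset.map_map]; rfl
  have := congrArg Polynomial.roots (e1 ▸ e2 ▸ h3)
  rwa [roots_multiset_prod_X_sub_C, roots_multiset_prod_X_sub_C] at this

lemma vnEntropy_diagonal {n : ℕ} (f : Fin n → ℝ) :
    vnEntropy (Matrix.diagonal (fun i => (f i : ℂ))) = -∑ i, f i * Real.logb 2 (f i) := by
  have hherm : (Matrix.diagonal (fun i => (f i : ℂ))).IsHermitian := by
    rw [Matrix.IsHermitian, Matrix.diagonal_conjTranspose]
    ext i j
    by_cases h : i = j <;> simp [h, Matrix.diagonal, Complex.conj_ofReal]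
  rw [vnEntropy, dif_pos hherm]
  have hmult := aux_multiset_eigs hherm f rfl
  have key := congrArg (fun s : Multiset ℂ =>
    (s.map (fun z => z.re * Real.logb 2 z.re)).sum) hmult
  simp only [Multiset.map_map, Function.comp, Complex.ofReal_re] at key
  exact congrArg Neg.neg key

/-! ### Auxiliary lemmas: kets and rank-one matrices -/

lemma star_bket (d a : ℕ) : star (bket d a) = bket d a := by
  ext p
  simp [bket, apply_ite (star : ℂ → ℂ)]

lemma mul_vecMulVec_mul_conj {m n : ℕ} (K : Matrix (Fin m) (Fin n) ℂ) (u v : Fin n → ℂ) :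
    K * Matrix.vecMulVec u (star v) * Kᴴ = Matrix.vecMulVec (K *ᵥ u) (star (K *ᵥ v)) := by
  ext i j
  simp only [Matrix.mul_apply, Matrix.vecMulVec_apply, Matrix.conjTranspose_apply,
    Matrix.mulVec, dotProduct, Pi.star_apply, star_sum, star_mul',
    Finset.sum_mul, Finset.mul_sum]
  refine Finset.sum_congr rfl fun q _ => Finset.sum_congr rfl fun p _ => by ring

lemma vecMulVec_mulVec' {m n : ℕ} (u : Fin m → ℂ) (w x : Fin n → ℂ) :
    Matrix.vecMulVec u w *ᵥ x = (w ⬝ᵥ x) • u := by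
  ext i
  simp only [Matrix.mulVec, dotProduct, Matrix.vecMulVec_apply, Pi.smul_apply,
    smul_eq_mul, Finset.sum_mul]
  exact Finset.sum_congr rfl fun p _ => by ring

lemma sum_fin_ite {m : ℕ} (g : Fin m → ℂ) (a : ℕ) (ha : a < m) :
    ∑ p : Fin m, (if (p : ℕ) = a then g p else 0) = g ⟨a, ha⟩ := by
  rw [Finset.sum_eq_single (⟨a, ha⟩ : Fin m)]
  · simp
  · intro b _ hb
    rw [if_neg (by simpa [Fin.ext_iff] using hb)]
  · simp

lemma bket_dot {d : ℕ} (a b : ℕ) (ha : a < d) :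
    star (bket d a) ⬝ᵥ bket d b = if a = b then 1 else 0 := by
  rw [star_bket]
  simp only [dotProduct, bket, ite_mul, one_mul, zero_mul]
  rw [show (∑ p : Fin d, if (p:ℕ) = a then (if (p:ℕ) = b then (1:ℂ) else 0) else 0) =
    ∑ p : Fin d, (if (p:ℕ) = a then (fun q : Fin d => if (q:ℕ) = b then (1:ℂ) else 0) p else 0)
    from rfl, sum_fin_ite _ a ha]

lemma vecMulVec_smul_smul {m n : ℕ} (a b : ℂ) (u : Fin m → ℂ) (v : Fin n → ℂ) :
    Matrix.vecMulVec (a • u) (b • v) = (a * b) • Matrix.vecMulVec u v := by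
  ext i j
  simp [Matrix.vecMulVec_apply]
  ring

lemma vecMulVec_bket (m a : ℕ) :
    Matrix.vecMulVec (bket m a) (star (bket m a)) =
      Matrix.diagonal (fun i : Fin m => if (i : ℕ) = a then 1 else 0) := by
  rw [star_bket]
  ext i j
  by_cases hij : i = j
  · subst hij
    simp only [Matrix.vecMulVec_apply, bket, Matrix.diagonal_apply_eq]
    by_cases h : (i:ℕ) = a <;> simp [h]
  · have : (i:ℕ) ≠ (j:ℕ) := fun h => hij (Fin.ext h)
    rw [Matrix.diagonal_apply_ne _ hij]
    simp only [Matrix.vecMulVec_apply, bket]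
    split_ifs with h1 h2 <;> simp_all

lemma sum_bket_proj (m t : ℕ) (ht : t ≤ m) :
    ∑ k ∈ Finset.range t, Matrix.vecMulVec (bket m k) (star (bket m k)) =
      Matrix.diagonal (fun i : Fin m => if (i : ℕ) < t then 1 else 0) := by
  ext i j
  rw [Matrix.sum_apply]
  simp only [vecMulVec_bket]
  by_cases hij : i = j
  · subst hij
    simp only [Matrix.diagonal_apply_eq]
    rw [Finset.sum_ite_eq (Finset.range t) (i:ℕ) (fun _ => (1:ℂ))]
    simp
  · rw [Matrix.diagonal_apply_ne _ hij]
    refine Finset.sum_eq_zero fun k _ => ?_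
    rw [Matrix.diagonal_apply_ne _ hij]

lemma vecMulVec_zero' {m n : ℕ} (v : Fin n → ℂ) :
    Matrix.vecMulVec (0 : Fin m → ℂ) v = 0 := by
  ext i j; simp [Matrix.vecMulVec_apply]

/-! ### Auxiliary lemmas: action of the Kraus operators on kets -/

lemma KrM_mulVec_zero {d k : ℕ} (hd : 2 ≤ d) (hk : k < d - 1) :
    KrM d k *ᵥ bket d 0 =
      ((1 / Real.sqrt ((d : ℝ) - 1) : ℝ) : ℂ) • bket d k := by
  rw [KrM, Matrix.add_mulVec, Matrix.smul_mulVec, vecMulVec_mulVec', vecMulVec_mulVec',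
    bket_dot 0 0 (by omega), bket_dot (k+1) 0 (by omega)]
  simp

lemma KrM_mulVec_succ {d k j : ℕ} (hd : 2 ≤ d) (hk : k < d - 1) (hj : j < d - 1) :
    KrM d k *ᵥ bket d (j+1) = if j = k then bket d (d-1) else 0 := by
  rw [KrM, Matrix.add_mulVec, Matrix.smul_mulVec, vecMulVec_mulVec', vecMulVec_mulVec',
    bket_dot 0 (j+1) (by omega), bket_dot (k+1) (j+1) (by omega)]
  by_cases h : j = k
  · simp [h]
  · rw [if_neg (by omega), if_neg (by omega)]
    simp [h]

lemma LrM_mulVec_zero {d j : ℕ} (hd : 2 ≤ d) (hj : j < d - 1) :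
    LrM d j *ᵥ bket d 0 =
      ((1 / Real.sqrt ((d : ℝ) - 1) : ℝ) : ℂ) • bket (d-1) j := by
  rw [LrM, Matrix.smul_mulVec, vecMulVec_mulVec', bket_dot 0 0 (by omega)]
  simp

lemma LrM_mulVec_succ {d j t : ℕ} (hd : 2 ≤ d) (hj : j < d - 1) (ht : t < d - 1) :
    LrM d j *ᵥ bket d (t+1) = 0 := by
  rw [LrM, Matrix.smul_mulVec, vecMulVec_mulVec', bket_dot 0 (t+1) (by omega)]
  simp

lemma VrM_mulVec_zero {d : ℕ} (hd : 2 ≤ d) : VrM d *ᵥ bket d 0 = 0 := by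
  ext a
  simp only [Matrix.mulVec, dotProduct, VrM, Matrix.of_apply, bket, ite_mul, one_mul,
    zero_mul, Pi.zero_apply]
  refine Finset.sum_eq_zero fun p _ => ?_
  split_ifs with h1 h2 <;> first | rfl | omega

lemma VrM_mulVec_succ {d j : ℕ} (hd : 2 ≤ d) (hj : j < d - 1) :
    VrM d *ᵥ bket d (j+1) = bket (d-1) j := by
  ext a
  simp only [Matrix.mulVec, dotProduct, VrM, Matrix.of_apply, bket, ite_mul, one_mul,
    zero_mul]
  rw [show (∑ p : Fin d, if (p:ℕ) = (a:ℕ)+1 then (if (p:ℕ) = j+1 then (1:ℂ) else 0) else 0) =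
    ∑ p : Fin d, (if (p:ℕ) = (a:ℕ)+1
      then (fun q : Fin d => if (q:ℕ) = j+1 then (1:ℂ) else 0) p else 0) from rfl,
    sum_fin_ite _ ((a:ℕ)+1) (by omega)]
  simp only []
  by_cases h : (a:ℕ) = j
  · rw [if_pos (by omega), if_pos h]
  · rw [if_neg (by omega), if_neg h]

lemma cc_eq {d : ℕ} (hd : 2 ≤ d) :
    ((1 / Real.sqrt ((d : ℝ) - 1) : ℝ) : ℂ) * ((1 / Real.sqrt ((d : ℝ) - 1) : ℝ) : ℂ) =
      (((((d:ℝ) - 1)⁻¹ : ℝ)) : ℂ) := by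
  rw [← Complex.ofReal_mul]
  congr 1
  rw [div_mul_div_comm, one_mul, Real.mul_self_sqrt (by
    have : (2:ℝ) ≤ (d:ℝ) := by exact_mod_cast hd
    linarith), one_div]

/-! ### Auxiliary lemmas: linearity of the channels -/

lemma chanMd_smul (d : ℕ) (a : ℂ) (X : Matrix (Fin d) (Fin d) ℂ) :
    chanMd d (a • X) = a • chanMd d X := by
  simp [chanMd, Matrix.mul_smul, Matrix.smul_mul, Finset.smul_sum]

lemma chanMd_add (d : ℕ) (X Y : Matrix (Fin d) (Fin d) ℂ) :
    chanMd d (X + Y) = chanMd d X + chanMd d Y := by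
  simp [chanMd, Matrix.mul_add, Matrix.add_mul, Finset.sum_add_distrib]

lemma chanMd_sum (d : ℕ) {α : Type*} (s : Finset α) (X : α → Matrix (Fin d) (Fin d) ℂ) :
    chanMd d (∑ j ∈ s, X j) = ∑ j ∈ s, chanMd d (X j) := by
  simp only [chanMd, Matrix.mul_sum, Matrix.sum_mul]
  rw [Finset.sum_comm]

lemma chanMdc_smul (d : ℕ) (a : ℂ) (X : Matrix (Fin d) (Fin d) ℂ) :
    chanMdc d (a • X) = a • chanMdc d X := by
  simp [chanMdc, Matrix.mul_smul, Matrix.smul_mul, Finset.smul_sum, smul_add]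

lemma chanMdc_add (d : ℕ) (X Y : Matrix (Fin d) (Fin d) ℂ) :
    chanMdc d (X + Y) = chanMdc d X + chanMdc d Y := by
  simp only [chanMdc, Matrix.mul_add, Matrix.add_mul, Finset.sum_add_distrib]
  abel

lemma chanMdc_sum (d : ℕ) {α : Type*} (s : Finset α) (X : α → Matrix (Fin d) (Fin d) ℂ) :
    chanMdc d (∑ j ∈ s, X j) = ∑ j ∈ s, chanMdc d (X j) := by
  simp only [chanMdc, Matrix.mul_sum, Matrix.sum_mul, Finset.sum_add_distrib]
  congr 1
  rw [Finset.sum_comm]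

/-! ### The channel outputs on the ensemble states -/

lemma chanMd_rho0 {d : ℕ} (hd : 2 ≤ d) :
    chanMd d (Matrix.vecMulVec (bket d 0) (star (bket d 0))) =
      Matrix.diagonal (fun i : Fin d =>
        (((if (i:ℕ) = d-1 then (0:ℝ) else ((d:ℝ)-1)⁻¹) : ℝ) : ℂ)) := by
  rw [chanMd]
  have step : ∀ k ∈ Finset.range (d-1),
      KrM d k * Matrix.vecMulVec (bket d 0) (star (bket d 0)) * (KrM d k)ᴴ =
      ((((((d:ℝ) - 1)⁻¹ : ℝ)) : ℂ)) • Matrix.vecMulVec (bket d k) (star (bket d k)) := by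
    intro k hk
    rw [mul_vecMulVec_mul_conj, KrM_mulVec_zero hd (Finset.mem_range.mp hk), star_smul,
      vecMulVec_smul_smul]
    rw [Complex.star_def, Complex.conj_ofReal, cc_eq hd]
  rw [Finset.sum_congr rfl step, ← Finset.smul_sum, sum_bket_proj d (d-1) (by omega)]
  ext i j
  by_cases hij : i = j
  · subst hij
    rw [Matrix.smul_apply, Matrix.diagonal_apply_eq, Matrix.diagonal_apply_eq]
    by_cases h : (i:ℕ) = d-1
    · simp [h, show ¬((i:ℕ) < d-1) by omega]
    · simp [h, show (i:ℕ) < d-1 by omega]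
  · rw [Matrix.smul_apply, Matrix.diagonal_apply_ne _ hij, Matrix.diagonal_apply_ne _ hij,
      smul_zero]

lemma chanMd_vmv_succ {d j : ℕ} (hd : 2 ≤ d) (hj : j < d - 1) :
    chanMd d (Matrix.vecMulVec (bket d (j+1)) (star (bket d (j+1)))) =
      Matrix.vecMulVec (bket d (d-1)) (star (bket d (d-1))) := by
  rw [chanMd]
  have step : ∀ k ∈ Finset.range (d-1),
      KrM d k * Matrix.vecMulVec (bket d (j+1)) (star (bket d (j+1))) * (KrM d k)ᴴ =
      if j = k then Matrix.vecMulVec (bket d (d-1)) (star (bket d (d-1))) else 0 := by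
    intro k hk
    rw [mul_vecMulVec_mul_conj, KrM_mulVec_succ hd (Finset.mem_range.mp hk) hj]
    by_cases h : j = k
    · rw [if_pos h, if_pos h]
    · rw [if_neg h, if_neg h, star_zero, vecMulVec_zero']
  rw [Finset.sum_congr rfl step, Finset.sum_ite_eq (Finset.range (d-1)) j,
    if_pos (Finset.mem_range.mpr hj)]

lemma chanMdc_rho0 {d : ℕ} (hd : 2 ≤ d) :
    chanMdc d (Matrix.vecMulVec (bket d 0) (star (bket d 0))) =
      Matrix.diagonal (fun _ : Fin (d-1) => ((((d:ℝ)-1)⁻¹ : ℝ) : ℂ)) := by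
  rw [chanMdc]
  have step : ∀ j ∈ Finset.range (d-1),
      LrM d j * Matrix.vecMulVec (bket d 0) (star (bket d 0)) * (LrM d j)ᴴ =
      ((((((d:ℝ) - 1)⁻¹ : ℝ)) : ℂ)) • Matrix.vecMulVec (bket (d-1) j) (star (bket (d-1) j)) := by
    intro j hj
    rw [mul_vecMulVec_mul_conj, LrM_mulVec_zero hd (Finset.mem_range.mp hj), star_smul,
      vecMulVec_smul_smul, Complex.star_def, Complex.conj_ofReal, cc_eq hd]
  rw [Finset.sum_congr rfl step, ← Finset.smul_sum, sum_bket_proj (d-1) (d-1) le_rfl,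
    mul_vecMulVec_mul_conj, VrM_mulVec_zero hd, star_zero, vecMulVec_zero', add_zero]
  ext i j
  by_cases hij : i = j
  · subst hij
    rw [Matrix.smul_apply, Matrix.diagonal_apply_eq, Matrix.diagonal_apply_eq,
      if_pos i.isLt, smul_eq_mul, mul_one]
  · rw [Matrix.smul_apply, Matrix.diagonal_apply_ne _ hij, Matrix.diagonal_apply_ne _ hij,
      smul_zero]

lemma chanMdc_vmv_succ {d j : ℕ} (hd : 2 ≤ d) (hj : j < d - 1) :
    chanMdc d (Matrix.vecMulVec (bket d (j+1)) (star (bket d (j+1)))) =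
      Matrix.vecMulVec (bket (d-1) j) (star (bket (d-1) j)) := by
  rw [chanMdc]
  have step : ∀ t ∈ Finset.range (d-1),
      LrM d t * Matrix.vecMulVec (bket d (j+1)) (star (bket d (j+1))) * (LrM d t)ᴴ = 0 := by
    intro t ht
    rw [mul_vecMulVec_mul_conj, LrM_mulVec_succ hd (Finset.mem_range.mp ht) hj, star_zero,
      vecMulVec_zero']
  rw [Finset.sum_congr rfl step, Finset.sum_const, smul_zero, zero_add,
    mul_vecMulVec_mul_conj, VrM_mulVec_succ hd hj]

/-! ### Real sums -/

lemma sum_last {m : ℕ} (hm : 1 ≤ m) (a b : ℝ) :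
    ∑ i : Fin m, (if (i:ℕ) = m - 1 then b else a) = ((m - 1 : ℕ) : ℝ) * a + b := by
  have key : ∀ i : Fin m, (if (i:ℕ) = m - 1 then b else a) =
      a + (if i = (⟨m - 1, by omega⟩ : Fin m) then b - a else 0) := by
    intro i
    by_cases h : (i:ℕ) = m - 1
    · rw [if_pos h, if_pos (Fin.ext h)]; ring
    · rw [if_neg h, if_neg (fun hh => h (by rw [hh]))]; ring
  rw [Finset.sum_congr rfl (fun i _ => key i), Finset.sum_add_distrib, Finset.sum_const,
    Finset.sum_ite_eq' Finset.univ _ (fun _ => b - a), if_pos (Finset.mem_univ _),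
    Finset.card_univ, Fintype.card_fin]
  have : ((m - 1 : ℕ) : ℝ) = (m : ℝ) - 1 := by
    push_cast [Nat.cast_sub hm]; ring
  rw [this, nsmul_eq_mul]
  ring

theorem stmt6 (d : ℕ) (hd : 2 ≤ d) :
    let ρ0 : Matrix (Fin d) (Fin d) ℂ := Matrix.vecMulVec (bket d 0) (star (bket d 0))
    let ρ1 : Matrix (Fin d) (Fin d) ℂ :=
      (1 / ((d : ℂ) - 1)) •
        ∑ j ∈ Finset.range (d - 1), Matrix.vecMulVec (bket d (j+1)) (star (bket d (j+1)))
    let ρbar : Matrix (Fin d) (Fin d) ℂ := (1/2 : ℂ) • ρ0 + (1/2 : ℂ) • ρ1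
    (vnEntropy (chanMd d ρbar) - vnEntropy (chanMdc d ρbar)) -
      (1/2) * (vnEntropy (chanMd d ρ0) - vnEntropy (chanMdc d ρ0)) -
      (1/2) * (vnEntropy (chanMd d ρ1) - vnEntropy (chanMdc d ρ1)) = 1 := by
  intro ρ0 ρ1 ρbar
  have hd1 : (1:ℕ) ≤ d - 1 := by omega
  have hr0 : (0:ℝ) < (d:ℝ) - 1 := by
    have : (2:ℝ) ≤ (d:ℝ) := by exact_mod_cast hd
    linarith
  have hcast : ((d - 1 : ℕ) : ℝ) = (d:ℝ) - 1 := by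
    push_cast [Nat.cast_sub (by omega : 1 ≤ d)]; ring
  have hccast : ((d - 1 : ℕ) : ℂ) = (d:ℂ) - 1 := by
    push_cast [Nat.cast_sub (by omega : 1 ≤ d)]; ring
  have hcne : ((d:ℂ) - 1) ≠ 0 := by
    intro h
    have : ((d:ℂ)) = ((1:ℕ) : ℂ) := by push_cast; linear_combination h
    have : d = 1 := Nat.cast_injective this
    omega
  -- channel outputs
  have hA0 : chanMd d ρ0 = Matrix.diagonal (fun i : Fin d =>
      (((if (i:ℕ) = d-1 then (0:ℝ) else ((d:ℝ)-1)⁻¹) : ℝ) : ℂ)) := chanMd_rho0 hd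
  have hC0 : chanMdc d ρ0 =
      Matrix.diagonal (fun _ : Fin (d-1) => ((((d:ℝ)-1)⁻¹ : ℝ) : ℂ)) := chanMdc_rho0 hd
  have hA1 : chanMd d ρ1 = Matrix.diagonal (fun i : Fin d =>
      (((if (i:ℕ) = d-1 then (1:ℝ) else 0) : ℝ) : ℂ)) := by
    show chanMd d ((1 / ((d : ℂ) - 1)) • _) = _
    rw [chanMd_smul, chanMd_sum,
      Finset.sum_congr rfl (fun j hj => chanMd_vmv_succ hd (Finset.mem_range.mp hj)),
      Finset.sum_const, Finset.card_range, ← Nat.cast_smul_eq_nsmul ℂ, smul_smul, hccast,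
      one_div, inv_mul_cancel₀ hcne, one_smul, vecMulVec_bket]
    ext i j
    by_cases hij : i = j
    · subst hij
      rw [Matrix.diagonal_apply_eq, Matrix.diagonal_apply_eq]
      by_cases h : (i:ℕ) = d-1 <;> simp [h]
    · rw [Matrix.diagonal_apply_ne _ hij, Matrix.diagonal_apply_ne _ hij]
  have hC1 : chanMdc d ρ1 =
      Matrix.diagonal (fun _ : Fin (d-1) => ((((d:ℝ)-1)⁻¹ : ℝ) : ℂ)) := by
    show chanMdc d ((1 / ((d : ℂ) - 1)) • _) = _
    rw [chanMdc_smul, chanMdc_sum,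
      Finset.sum_congr rfl (fun j hj => chanMdc_vmv_succ hd (Finset.mem_range.mp hj)),
      sum_bket_proj (d-1) (d-1) le_rfl]
    ext i j
    by_cases hij : i = j
    · subst hij
      rw [Matrix.smul_apply, Matrix.diagonal_apply_eq, Matrix.diagonal_apply_eq,
        if_pos i.isLt, smul_eq_mul, mul_one, one_div]
      push_cast
      ring
    · rw [Matrix.smul_apply, Matrix.diagonal_apply_ne _ hij, Matrix.diagonal_apply_ne _ hij,
        smul_zero]
  have hAbar : chanMd d ρbar = Matrix.diagonal (fun i : Fin d =>
      (((if (i:ℕ) = d-1 then (1/2 : ℝ) else (1/2) * ((d:ℝ)-1)⁻¹) : ℝ) : ℂ)) := by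
    show chanMd d ((1/2 : ℂ) • ρ0 + (1/2 : ℂ) • ρ1) = _
    rw [chanMd_add, chanMd_smul, chanMd_smul, hA0, hA1]
    ext i j
    by_cases hij : i = j
    · subst hij
      simp only [Matrix.add_apply, Matrix.smul_apply, Matrix.diagonal_apply_eq]
      by_cases h : (i:ℕ) = d-1
      · simp [h]
      · simp only [h, if_false, smul_eq_mul]
        push_cast
        ring
    · simp [Matrix.diagonal_apply_ne _ hij]
  have hCbar : chanMdc d ρbar =
      Matrix.diagonal (fun _ : Fin (d-1) => ((((d:ℝ)-1)⁻¹ : ℝ) : ℂ)) := by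
    show chanMdc d ((1/2 : ℂ) • ρ0 + (1/2 : ℂ) • ρ1) = _
    rw [chanMdc_add, chanMdc_smul, chanMdc_smul, hC0, hC1, ← add_smul]
    norm_num
  -- entropies
  set L := Real.logb 2 ((d:ℝ) - 1) with hL
  have hlogb_inv : Real.logb 2 (((d:ℝ)-1)⁻¹) = -L := Real.logb_inv _ _
  have SA0 : vnEntropy (chanMd d ρ0) = L := by
    rw [hA0, vnEntropy_diagonal (fun i : Fin d => if (i:ℕ) = d-1 then (0:ℝ) else ((d:ℝ)-1)⁻¹)]
    have key : ∀ i : Fin d, (if (i:ℕ) = d - 1 then (0:ℝ) else ((d:ℝ)-1)⁻¹) *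
        Real.logb 2 (if (i:ℕ) = d - 1 then (0:ℝ) else ((d:ℝ)-1)⁻¹) =
        if (i:ℕ) = d - 1 then (0:ℝ) * Real.logb 2 0
          else ((d:ℝ)-1)⁻¹ * Real.logb 2 ((d:ℝ)-1)⁻¹ :=
      fun i => by split_ifs <;> rfl
    rw [Finset.sum_congr rfl (fun i _ => key i), sum_last (by omega), hcast, hlogb_inv]
    field_simp
    simp
  have SC0 : vnEntropy (chanMdc d ρ0) = L := by
    rw [hC0, vnEntropy_diagonal (fun _ : Fin (d-1) => ((d:ℝ)-1)⁻¹)]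
    rw [Finset.sum_const, Finset.card_univ, Fintype.card_fin, nsmul_eq_mul, hcast, hlogb_inv]
    field_simp
  have SA1 : vnEntropy (chanMd d ρ1) = 0 := by
    rw [hA1, vnEntropy_diagonal (fun i : Fin d => if (i:ℕ) = d-1 then (1:ℝ) else 0)]
    have key : ∀ i : Fin d, (if (i:ℕ) = d - 1 then (1:ℝ) else 0) *
        Real.logb 2 (if (i:ℕ) = d - 1 then (1:ℝ) else 0) =
        if (i:ℕ) = d - 1 then (1:ℝ) * Real.logb 2 1 else (0:ℝ) * Real.logb 2 0 :=
      fun i => by split_ifs <;> rfl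
    rw [Finset.sum_congr rfl (fun i _ => key i), sum_last (by omega)]
    simp [Real.logb_one]
  have SC1 : vnEntropy (chanMdc d ρ1) = L := by
    rw [hC1, vnEntropy_diagonal (fun _ : Fin (d-1) => ((d:ℝ)-1)⁻¹)]
    rw [Finset.sum_const, Finset.card_univ, Fintype.card_fin, nsmul_eq_mul, hcast, hlogb_inv]
    field_simp
  have SCbar : vnEntropy (chanMdc d ρbar) = L := by
    rw [hCbar, vnEntropy_diagonal (fun _ : Fin (d-1) => ((d:ℝ)-1)⁻¹)]
    rw [Finset.sum_const, Finset.card_univ, Fintype.card_fin, nsmul_eq_mul, hcast, hlogb_inv]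
    field_simp
  have hlogb_half : Real.logb 2 ((1:ℝ)/2) = -1 := by
    rw [one_div, Real.logb_inv, Real.logb_self_eq_one (by norm_num)]
  have hlogb_mix : Real.logb 2 ((1/2) * ((d:ℝ)-1)⁻¹) = -1 - L := by
    rw [Real.logb_mul (by norm_num) (by positivity), hlogb_half, hlogb_inv]
    ring
  have SAbar : vnEntropy (chanMd d ρbar) = 1 + L/2 := by
    rw [hAbar, vnEntropy_diagonal
      (fun i : Fin d => if (i:ℕ) = d-1 then (1/2 : ℝ) else (1/2) * ((d:ℝ)-1)⁻¹)]
    have key : ∀ i : Fin d, (if (i:ℕ) = d - 1 then (1/2:ℝ) else (1/2) * ((d:ℝ)-1)⁻¹) *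
        Real.logb 2 (if (i:ℕ) = d - 1 then (1/2:ℝ) else (1/2) * ((d:ℝ)-1)⁻¹) =
        if (i:ℕ) = d - 1 then (1/2:ℝ) * Real.logb 2 (1/2)
          else ((1/2) * ((d:ℝ)-1)⁻¹) * Real.logb 2 ((1/2) * ((d:ℝ)-1)⁻¹) :=
      fun i => by split_ifs <;> rfl
    rw [Finset.sum_congr rfl (fun i _ => key i), sum_last (by omega), hcast, hlogb_half,
      hlogb_mix]
    field_simp
    ring
  rw [SA0, SC0, SA1, SC1, SAbar, SCbar]
  ring
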